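/- (Language-theoretic form of the cluster combination lemma, Lemma 4.) Let A be an ε-NFA over the alphabet Σ ∪ {β}, where β ∉ Σ is a fresh symbol, with states θ, φ, θ', φ', such that the β-labeled transitions of A are exactly the single transition from θ' to φ' (for all states s, t: t ∈ step(s, β) iff s = θ' and t = φ'). For states s, t let L(s, t) be the set of strings over Σ ∪ {β} that label a path from s to t in A (ε-transitions allowed), and let LΣ(s, t) = L(s, t) ∩ Σ* be the β-free such strings. Let M be any language over Σ, and let subst_β(L(θ, φ), M) over Σ be the β-substitution of M into L(θ, φ), i.e., the set of strings u₀v₁u₁v₂⋯v_k u_k (k ≥ 0) such that each u_h ∈ Σ*, each v_h ∈ M, and u₀ β u₁ β ⋯ β u_k ∈ L(θ, φ). Then subst_β(L(θ, φ), M) = LΣ(θ, φ) ∪ LΣ(θ, θ') · M · ( LΣ(φ', θ') · M )* · LΣ(φ', φ), where · denotes language concatenation and * denotes Kleene star. -/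

import Mathlib

open Computability

/-- `expand β M x`: the language of all strings obtained from `x` by replacing each
occurrence of the symbol `β` by some string of the language `M` (keeping all other
characters).  Thus `{w | ∃ x ∈ L, w ∈ expand β M x}` is the `β`-substitution of `M`
into `L`: exactly the strings `u₀ v₁ u₁ v₂ ⋯ v_k u_k` with each `u_h` `β`-free, each
`v_h ∈ M`, and `u₀ β u₁ β ⋯ β u_k ∈ L`. -/
def expand {Γ : Type*} [DecidableEq Γ] (β : Γ) (M : Language Γ) : List Γ → Language Γ
  | [] => 1
  | a :: x => (if a = β then M else {[a]}) * expand β M x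

/-- `pathLang A s t`: the set of strings labeling a path from state `s` to state `t`
in the ε-NFA `A` (`ε`-transitions allowed). -/
def pathLang {Γ σ : Type*} (A : εNFA Γ σ) (s t : σ) : Language Γ :=
  {w | t ∈ A.evalFrom {s} w}

/-- `pathLangFree A β s t = LΣ(s, t)`: the `β`-free strings labeling a path from `s` to `t`. -/
def pathLangFree {Γ σ : Type*} (A : εNFA Γ σ) (β : Γ) (s t : σ) : Language Γ :=
  {w | t ∈ A.evalFrom {s} w ∧ β ∉ w}


namespace ClusterAux

variable {Γ σ : Type*} (A : εNFA Γ σ)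
theorem εClosure_mono {S T : Set σ} (h : S ⊆ T) : A.εClosure S ⊆ A.εClosure T := by
  intro s hs
  induction hs with
  | base s hs => exact εNFA.εClosure.base s (h hs)
  | step s t ht _ ih => exact εNFA.εClosure.step s t ht ih

theorem εClosure_closed {X : Set σ}
    (h : ∀ s t, t ∈ A.step s none → s ∈ X → t ∈ X) : A.εClosure X = X := by
  apply Set.Subset.antisymm _ (A.subset_εClosure X)
  intro s hs
  induction hs with
  | base s hs => exact hs
  | step s t ht _ ih => exact h s t ht ih

theorem εClosure_idem (S : Set σ) : A.εClosure (A.εClosure S) = A.εClosure S :=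
  εClosure_closed A fun s t ht hs => εNFA.εClosure.step s t ht hs

theorem εClosure_stepSet (S : Set σ) (a : Γ) :
    A.εClosure (A.stepSet S a) = A.stepSet S a := by
  apply εClosure_closed
  intro s t ht hs
  rw [εNFA.mem_stepSet_iff] at hs ⊢
  obtain ⟨m, hm, hs⟩ := hs
  exact ⟨m, hm, εNFA.εClosure.step s t ht hs⟩

theorem stepSet_mono {S T : Set σ} (h : S ⊆ T) (a : Γ) : A.stepSet S a ⊆ A.stepSet T a := by
  intro s hs
  rw [εNFA.mem_stepSet_iff] at hs ⊢
  obtain ⟨m, hm, hs⟩ := hs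
  exact ⟨m, h hm, hs⟩

theorem foldl_stepSet_mono {S T : Set σ} (h : S ⊆ T) (w : List Γ) :
    List.foldl A.stepSet S w ⊆ List.foldl A.stepSet T w := by
  induction w generalizing S T with
  | nil => exact h
  | cons a w ih => exact ih (stepSet_mono A h a)

theorem foldl_stepSet_closed {X : Set σ} (h : A.εClosure X = X) (w : List Γ) :
    List.foldl A.stepSet X w = A.evalFrom X w := by
  rw [εNFA.evalFrom, h]

theorem evalFrom_append (S : Set σ) (u v : List Γ) :
    A.evalFrom S (u ++ v) = List.foldl A.stepSet (A.evalFrom S u) v := by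
  rw [εNFA.evalFrom, List.foldl_append]

theorem εClosure_evalFrom (S : Set σ) (w : List Γ) :
    A.εClosure (A.evalFrom S w) = A.evalFrom S w := by
  have key : ∀ (w : List Γ) (X : Set σ), A.εClosure X = X →
      A.εClosure (List.foldl A.stepSet X w) = List.foldl A.stepSet X w := by
    intro w
    induction w with
    | nil => intro X h; exact h
    | cons a w ih => intro X _; exact ih _ (εClosure_stepSet A X a)
  exact key w _ (εClosure_idem A S)

theorem evalFrom_trans {s m t : σ} {u v : List Γ}
    (hu : m ∈ A.evalFrom {s} u) (hv : t ∈ A.evalFrom {m} v) :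
    t ∈ A.evalFrom {s} (u ++ v) := by
  rw [evalFrom_append]
  refine foldl_stepSet_mono A ?_ v hv
  rw [← εClosure_evalFrom A {s} u]
  exact εClosure_mono A (Set.singleton_subset_iff.2 hu)


theorem foldl_stepSet_empty (w : List Γ) : List.foldl A.stepSet ∅ w = ∅ := by
  induction w with
  | nil => rfl
  | cons a w ih => simpa using ih

section Beta
variable {A} {β : Γ} {θ' φ' : σ} (hβ : ∀ s t : σ, t ∈ A.step s (some β) ↔ s = θ' ∧ t = φ')
include hβ

theorem beta_split {s t : σ} {u v : List Γ} (h : t ∈ A.evalFrom {s} (u ++ β :: v)) :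
    θ' ∈ A.evalFrom {s} u ∧ t ∈ A.evalFrom {φ'} v := by
  rw [evalFrom_append] at h
  simp only [List.foldl_cons] at h
  by_cases hθ : θ' ∈ A.evalFrom {s} u
  · refine ⟨hθ, ?_⟩
    have hE : A.stepSet (A.evalFrom {s} u) β ⊆ A.εClosure {φ'} := by
      intro x hx
      rw [εNFA.mem_stepSet_iff] at hx
      obtain ⟨m, _, hx⟩ := hx
      refine εClosure_mono A ?_ hx
      intro y hy
      exact ((hβ m y).1 hy).2
    rw [εNFA.evalFrom]
    exact foldl_stepSet_mono A hE v h
  · exfalso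
    have hE : A.stepSet (A.evalFrom {s} u) β = ∅ := by
      apply Set.eq_empty_iff_forall_notMem.2
      intro x hx
      rw [εNFA.mem_stepSet_iff] at hx
      obtain ⟨m, hm, hx⟩ := hx
      have : A.step m (some β) = ∅ := by
        apply Set.eq_empty_iff_forall_notMem.2
        intro y hy
        exact hθ (((hβ m y).1 hy).1 ▸ hm)
      rw [this, εNFA.εClosure_empty] at hx
      exact hx
    rw [hE, foldl_stepSet_empty] at h
    exact h

theorem beta_join {s t : σ} {u v : List Γ}
    (hu : θ' ∈ A.evalFrom {s} u) (hv : t ∈ A.evalFrom {φ'} v) :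
    t ∈ A.evalFrom {s} (u ++ β :: v) := by
  refine evalFrom_trans A hu ?_
  show t ∈ A.evalFrom {θ'} (β :: v)
  rw [εNFA.evalFrom, List.foldl_cons]
  have h1 : A.step θ' (some β) = {φ'} := by
    ext y; simp [hβ]
  have hsub : A.εClosure {φ'} ⊆ A.stepSet (A.εClosure {θ'}) β := by
    intro x hx
    rw [εNFA.mem_stepSet_iff]
    exact ⟨θ', A.subset_εClosure _ rfl, by rwa [h1]⟩
  rw [εNFA.evalFrom] at hv
  exact foldl_stepSet_mono A hsub v hv

end Beta

section Expand
variable [DecidableEq Γ] {β : Γ} (M : Language Γ)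

theorem expand_append (x y : List Γ) :
    expand β M (x ++ y) = expand β M x * expand β M y := by
  induction x with
  | nil => simp [expand]
  | cons a x ih => simp [expand, ih, mul_assoc]

theorem expand_of_not_mem {x : List Γ} (h : β ∉ x) : expand β M x = {x} := by
  induction x with
  | nil =>
    ext w
    rw [expand, Language.mem_one]
    exact ⟨fun h => h, fun h => h⟩
  | cons a x ih =>
    have ha : a ≠ β := fun h' => h (h' ▸ List.mem_cons_self (a := a) (l := x))
    have hx : β ∉ x := fun h' => h (List.mem_cons_of_mem a h')
    ext w
    rw [expand, if_neg ha, ih hx, Language.mem_mul]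
    constructor
    · rintro ⟨a1, ha1, b, hb, hw⟩
      rw [show a1 = [a] from ha1, show b = x from hb] at hw
      exact hw.symm
    · rintro rfl
      exact ⟨[a], rfl, x, rfl, rfl⟩

theorem split_first_beta {x : List Γ} (h : β ∈ x) :
    ∃ u v, x = u ++ β :: v ∧ β ∉ u := by
  induction x with
  | nil => simp at h
  | cons a x ih =>
    by_cases ha : a = β
    · subst ha; exact ⟨[], x, rfl, by simp⟩
    · obtain ⟨u, v, rfl, hu⟩ := ih (by rcases List.mem_cons.1 h with h | h; exact absurd h.symm ha; exact h)
      refine ⟨a :: u, v, rfl, ?_⟩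
      simp only [List.mem_cons, not_or]
      exact ⟨fun h' => ha h'.symm, hu⟩

end Expand

section Main
variable [DecidableEq Γ] {A} {β : Γ} {θ φ θ' φ' : σ}
  (hβ : ∀ s t : σ, t ∈ A.step s (some β) ↔ s = θ' ∧ t = φ')
  (M : Language Γ)
include hβ

theorem forward : ∀ (n : ℕ) (x : List Γ) (s : σ), x.count β ≤ n →
    φ ∈ A.evalFrom {s} x → ∀ w ∈ expand β M x,
    w ∈ pathLangFree A β s φ +
      pathLangFree A β s θ' * M * (pathLangFree A β φ' θ' * M)∗ * pathLangFree A β φ' φ := by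
  intro n
  induction n with
  | zero =>
    intro x s hc hpath w hw
    have hx : β ∉ x := List.count_eq_zero.1 (Nat.le_zero.1 hc)
    rw [expand_of_not_mem M hx] at hw
    rw [Language.mem_add]
    exact Or.inl (by rw [show w = x from hw]; exact ⟨hpath, hx⟩)
  | succ n ih =>
    intro x s hc hpath w hw
    by_cases hb : β ∈ x
    · obtain ⟨u, v, rfl, hu⟩ := split_first_beta hb
      have hcv : v.count β ≤ n := by
        have : (u ++ β :: v).count β = v.count β + 1 := by
          simp [List.count_append, List.count_cons, List.count_eq_zero.2 hu]
        omega
      obtain ⟨hθ, hv⟩ := beta_split hβ hpath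
      rw [expand_append, expand_of_not_mem M hu] at hw
      have hexp : expand β M (β :: v) = M * expand β M v := by
        simp [expand]
      rw [hexp] at hw
      rw [Language.mem_mul] at hw
      obtain ⟨u', hu', r, hr, hwr⟩ := hw
      rw [show u' = u from hu'] at hwr
      rw [Language.mem_mul] at hr
      obtain ⟨m, hm, z, hz, hrz⟩ := hr
      have hzmem := ih v φ' hcv hv z hz
      rw [Language.mem_add] at hzmem
      rw [Language.mem_add]
      refine Or.inr ?_
      rcases hzmem with hz1 | hz2
      · have h1 : u ++ m ∈ pathLangFree A β s θ' * M :=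
          Language.append_mem_mul ⟨hθ, hu⟩ hm
        have h2 : (u ++ m) ++ [] ∈
            pathLangFree A β s θ' * M * (pathLangFree A β φ' θ' * M)∗ :=
          Language.append_mem_mul h1 (Language.nil_mem_kstar _)
        have h3 := Language.append_mem_mul h2 hz1
        have : w = ((u ++ m) ++ []) ++ z := by
          rw [← hwr, ← hrz]; simp
        rwa [this]
      · rw [Language.mem_mul] at hz2
        obtain ⟨pq, hpq, c, hc', hzc⟩ := hz2
        rw [Language.mem_mul] at hpq
        obtain ⟨p, hp, q, hq, hpqe⟩ := hpq
        rw [Language.mem_kstar] at hq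
        obtain ⟨L, rfl, hL⟩ := hq
        have hpk : p ++ L.flatten ∈ (pathLangFree A β φ' θ' * M)∗ := by
          rw [Language.mem_kstar]
          exact ⟨p :: L, by simp, by
            intro y hy
            rcases List.mem_cons.1 hy with rfl | hy
            · exact hp
            · exact hL y hy⟩
        have h1 : u ++ m ∈ pathLangFree A β s θ' * M :=
          Language.append_mem_mul ⟨hθ, hu⟩ hm
        have h2 := Language.append_mem_mul (Language.append_mem_mul h1 hpk) hc'
        have : w = ((u ++ m) ++ (p ++ L.flatten)) ++ c := by
          rw [← hwr, ← hrz, ← hzc, ← hpqe]; simp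
        rwa [this]
    · rw [expand_of_not_mem M hb] at hw
      rw [Language.mem_add]
      exact Or.inl (by rw [show w = x from hw]; exact ⟨hpath, hb⟩)

theorem backward_aux : ∀ (L : List (List Γ)),
    (∀ p ∈ L, p ∈ pathLangFree A β φ' θ' * M) →
    ∀ c ∈ pathLangFree A β φ' φ,
    ∃ y, φ ∈ A.evalFrom {φ'} y ∧ (L.flatten ++ c) ∈ expand β M y := by
  intro L
  induction L with
  | nil =>
    intro _ c hc
    refine ⟨c, hc.1, ?_⟩
    rw [expand_of_not_mem M hc.2]
    simp
    rfl
  | cons p L ih =>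
    intro hL c hc
    obtain ⟨a, ha, b, hb, hpe⟩ := Language.mem_mul.1 (hL p (List.mem_cons_self (a := p) (l := L)))
    obtain ⟨y', hy', hz⟩ := ih (fun q hq => hL q (List.mem_cons_of_mem p hq)) c hc
    refine ⟨a ++ β :: y', beta_join hβ ha.1 hy', ?_⟩
    rw [expand_append, expand_of_not_mem M ha.2]
    have hexp : expand β M (β :: y') = M * expand β M y' := by simp [expand]
    rw [hexp]
    have : (p :: L).flatten ++ c = a ++ (b ++ (L.flatten ++ c)) := by
      rw [← hpe]; simp
    rw [this]
    exact Language.append_mem_mul rfl (Language.append_mem_mul hb hz)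

end Main
end ClusterAux

open ClusterAux in
/-- Language-theoretic form of the cluster combination lemma (Lemma 4).  If the `β`-labeled
transitions of `A` are exactly the single extended transition from `θ'` to `φ'`, and `M` is
any language over `Σ = Γ \ {β}`, then the `β`-substitution of `M` into `L(θ, φ)` equals
`LΣ(θ,φ) ∪ LΣ(θ,θ') · M · (LΣ(φ',θ') · M)* · LΣ(φ',φ)`. -/
theorem cluster_combination {Γ σ : Type*} [DecidableEq Γ] (A : εNFA Γ σ) (β : Γ)
    (θ φ θ' φ' : σ)
    (hβ : ∀ s t : σ, t ∈ A.step s (some β) ↔ s = θ' ∧ t = φ')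
    (M : Language Γ) (hM : ∀ w ∈ M, β ∉ w) :
    {w | ∃ x ∈ pathLang A θ φ, w ∈ expand β M x} =
      pathLangFree A β θ φ +
        pathLangFree A β θ θ' * M * (pathLangFree A β φ' θ' * M)∗ * pathLangFree A β φ' φ := by
  ext w
  simp only [Set.mem_setOf_eq]
  constructor
  · rintro ⟨x, hx, hw⟩
    exact forward hβ M (x.count β) x θ le_rfl hx w hw
  · intro h
    replace h := (Language.mem_add _ _ _).1 h
    rcases h with ⟨hp, hf⟩ | h
    · exact ⟨w, hp, by rw [expand_of_not_mem M hf]; rfl⟩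
    · obtain ⟨r, hr, c, hc, hw⟩ := Language.mem_mul.1 h
      obtain ⟨q, hq, ks, hks, hrq⟩ := Language.mem_mul.1 hr
      obtain ⟨u, hu, m, hm, hqe⟩ := Language.mem_mul.1 hq
      obtain ⟨L, rfl, hL⟩ := Language.mem_kstar.1 hks
      obtain ⟨y, hy, hz⟩ := backward_aux hβ M L hL c hc
      refine ⟨u ++ β :: y, beta_join hβ hu.1 hy, ?_⟩
      rw [expand_append, expand_of_not_mem M hu.2]
      have hexp : expand β M (β :: y) = M * expand β M y := by simp [expand]
      rw [hexp]
      have : w = u ++ (m ++ (L.flatten ++ c)) := by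
        rw [← hw, ← hrq, ← hqe]; simp
      rw [this]
      exact Language.append_mem_mul rfl (Language.append_mem_mul hm hz)
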